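/- Let Δ = (C, δ) be a building of type (W, S), let R and T be residues, and let Σ be an apartment with Σ ∩ R ≠ ∅ ≠ Σ ∩ T. Then Σ ∩ proj_R(T) = proj_{Σ∩R}(Σ ∩ T). -/

import Mathlib

noncomputable section
open Classical

namespace BldgPaper

variable {B W : Type*} [Group W] {M : CoxeterMatrix B}

/-- `(W,S)` is 2-complete: `2 < m_{st} < ∞` for all distinct `s,t` (entry `0` codes `∞`). -/
def TwoComplete (M : CoxeterMatrix B) : Prop := ∀ i j : B, i ≠ j → 2 < M i j

/-- `(W,S)` is `Ã₂`-free: no three distinct generators have all pairwise orders equal to `3`. -/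
def A2TildeFree (M : CoxeterMatrix B) : Prop :=
  ∀ i j k : B, i ≠ j → j ≠ k → i ≠ k → ¬ (M i j = 3 ∧ M j k = 3 ∧ M i k = 3)

variable (cs : CoxeterSystem M W) {C : Type*} (δ : C → C → W)

/-- The W-metric building axioms for a distance function `δ` on a set of chambers. -/
structure IsBuilding : Prop where
  nonempty : Nonempty C
  eq_one_iff : ∀ x y, δ x y = 1 ↔ x = y
  step : ∀ x y z (i : B), δ y z = cs.simple i → δ x z = δ x y ∨ δ x z = δ x y * cs.simple i
  step_of_length : ∀ x y z (i : B), δ y z = cs.simple i →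
      cs.length (δ x y * cs.simple i) = cs.length (δ x y) + 1 → δ x z = δ x y * cs.simple i
  exists_step : ∀ x y (i : B), ∃ z, δ y z = cs.simple i ∧ δ x z = δ x y * cs.simple i

/-- The standard parabolic subgroup `⟨J⟩`. -/
def parab (J : Set B) : Subgroup W := Subgroup.closure (cs.simple '' J)

/-- The `J`-residue of the chamber `x`. -/
def residue (J : Set B) (x : C) : Set C := {y | δ x y ∈ parab cs J}

def IsResidue (R : Set C) : Prop := ∃ (J : Set B) (x : C), R = residue cs δ J x

def IsPanel (R : Set C) : Prop := ∃ (i : B) (x : C), R = residue cs δ {i} x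

/-- A spherical residue of rank 2. -/
def IsSphRank2 (R : Set C) : Prop :=
  ∃ (i j : B) (x : C), i ≠ j ∧ (parab cs {i, j} : Set W).Finite ∧ R = residue cs δ {i, j} x

/-- `g` is the gate (projection) of `c` onto the set `R`. -/
def IsGate (R : Set C) (c g : C) : Prop :=
  g ∈ R ∧ ∀ y ∈ R, cs.length (δ c y) = cs.length (δ c g) + cs.length (δ g y)

/-- The projection `proj_R c` of a chamber onto a residue (the gate). -/
noncomputable def proj (R : Set C) (c : C) : C :=
  if h : ∃ g, IsGate cs δ R c g then h.choose else c

/-- `proj_R T = { proj_R t | t ∈ T }`. -/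
def projSet (R T : Set C) : Set C := proj cs δ R '' T

/-- Two residues are parallel if they project onto each other. -/
def Parallel (R T : Set C) : Prop :=
  projSet cs δ R T = R ∧ projSet cs δ T R = T

/-- An apartment: a nonempty, convex and thin set of chambers. -/
def IsApartment (A : Set C) : Prop :=
  A.Nonempty ∧
  (∀ P : Set C, IsPanel cs δ P → (P ∩ A).Nonempty → ∀ c ∈ A, proj cs δ P c ∈ A) ∧
  (∀ P : Set C, IsPanel cs δ P → (P ∩ A).Nonempty → (P ∩ A).ncard = 2)

/-- A root of the apartment `A`: a subset isometric to a half-space `α_i` of `W`. -/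
def IsRootOf (A α : Set C) : Prop :=
  α ⊆ A ∧ ∃ (i : B) (f : C → W),
    Set.BijOn f α {w : W | cs.length w < cs.length (cs.simple i * w)} ∧
    ∀ x ∈ α, ∀ y ∈ α, δ x y = (f x)⁻¹ * f y

/-- `x` and `y` are opposite in the (spherical) residue `R`:
their distance has maximal length among chambers of `R`. -/
def OppChambersIn (R : Set C) (x y : C) : Prop :=
  x ∈ R ∧ y ∈ R ∧ ∀ z ∈ R, cs.length (δ x z) ≤ cs.length (δ x y)

/-- The residues `P` and `Q` are opposite in `R`. -/
def OppResiduesIn (R P Q : Set C) : Prop :=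
  P ⊆ R ∧ Q ⊆ R ∧ ∀ p ∈ P, ∃ q ∈ Q, OppChambersIn cs δ R p q

/-- `(P 0, …, P m)` is a compatible path of panels, where for `1 ≤ i ≤ m` the
set `R i` is the unique rank-2 spherical residue `R(P (i-1), P i)` in which the
consecutive panels `P (i-1)` and `P i` are opposite. -/
def IsCompatiblePath (m : ℕ) (P : ℕ → Set C) (R : ℕ → Set C) : Prop :=
  (∀ i ≤ m, IsPanel cs δ (P i)) ∧
  ∀ i, 1 ≤ i → i ≤ m →
    IsSphRank2 cs δ (R i) ∧ OppResiduesIn cs δ (R i) (P (i-1)) (P i) ∧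
    projSet cs δ (R i) (P 0) = P (i-1)

/-- A triangle: three pairwise distinct rank-2 spherical residues whose mutual
projections are panels (T1), such that the two panels obtained by projecting onto any
one of them are not parallel (T2). -/
def IsTriangle (R₁ R₂ R₃ : Set C) : Prop :=
  R₁ ≠ R₂ ∧ R₂ ≠ R₃ ∧ R₁ ≠ R₃ ∧
  IsSphRank2 cs δ R₁ ∧ IsSphRank2 cs δ R₂ ∧ IsSphRank2 cs δ R₃ ∧
  IsPanel cs δ (projSet cs δ R₁ R₂) ∧ IsPanel cs δ (projSet cs δ R₂ R₁) ∧
  IsPanel cs δ (projSet cs δ R₁ R₃) ∧ IsPanel cs δ (projSet cs δ R₃ R₁) ∧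
  IsPanel cs δ (projSet cs δ R₂ R₃) ∧ IsPanel cs δ (projSet cs δ R₃ R₂) ∧
  ¬ Parallel cs δ (projSet cs δ R₁ R₂) (projSet cs δ R₁ R₃) ∧
  ¬ Parallel cs δ (projSet cs δ R₂ R₁) (projSet cs δ R₂ R₃) ∧
  ¬ Parallel cs δ (projSet cs δ R₃ R₁) (projSet cs δ R₃ R₂)

/-! Coxeter complex notions: the building `(W, δW)` with `δW x y = x⁻¹ * y`. -/

/-- The distance function of the Coxeter complex `Σ(W,S)`. -/
def δW : W → W → W := fun x y => x⁻¹ * y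

/-- The half-space `α_i = {w | ℓ(s_i w) > ℓ(w)}`. -/
def halfspace (i : B) : Set W := {v | cs.length v < cs.length (cs.simple i * v)}

/-- The root `w · α_i` of `(W,S)`. -/
def rootW (w : W) (i : B) : Set W := (w * ·) '' halfspace cs i

/-- `α` is a root with associated reflection `t`. -/
def IsRootPair (α : Set W) (t : W) : Prop :=
  ∃ (w : W) (i : B), α = rootW cs w i ∧ t = w * cs.simple i * w⁻¹

/-- `R` belongs to `∂²α` for a root with reflection `t`: it is a spherical rank-2
residue of the Coxeter complex stabilized by `t`. -/
def MemBd2 (t : W) (R : Set W) : Prop :=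
  IsSphRank2 cs (δW (W := W)) R ∧ (t * ·) '' R = R

/-- `{α 0, α 1, α 2}` (with reflections `t 0, t 1, t 2`) is a combinatorial triangle. -/
def IsCombTriangle (α : Fin 3 → Set W) (t : Fin 3 → W) : Prop :=
  (∀ a, IsRootPair cs (α a) (t a)) ∧
  (∀ a b, a ≠ b → t a ≠ t b) ∧
  (∀ a b : Fin 3, IsOfFinOrder (t a * t b)) ∧
  (¬ ∃ R : Set W, ∀ a, MemBd2 cs (t a) R) ∧
  (∀ a b c : Fin 3, a ≠ b → b ≠ c → a ≠ c →
    ∃ σ : Set W, MemBd2 cs (t b) σ ∧ MemBd2 cs (t c) σ ∧ σ ⊆ α a)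


/-- A (type-preserving) automorphism of the building. -/
def IsAutom (g : Equiv.Perm C) : Prop := ∀ x y, δ (g x) (g y) = δ x y

/-- The simple root `α_i` of the apartment `A` determined by the base chamber `c`. -/
def simpleRootAt (A : Set C) (c : C) (i : B) : Set C :=
  {x ∈ A | cs.length (δ c x) < cs.length (cs.simple i * δ c x)}

/-- `U` is the root group associated with the root `α`: its elements are automorphisms
fixing pointwise every panel meeting `α` in at least two chambers, and it acts simply
transitively on `P \ α` for every panel `P` meeting `α` in exactly one chamber. -/
def IsRootGroup (α : Set C) (U : Subgroup (Equiv.Perm C)) : Prop :=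
  (∀ g ∈ U, IsAutom δ g) ∧
  (∀ g ∈ U, ∀ P : Set C, IsPanel cs δ P → 2 ≤ (P ∩ α).ncard → ∀ x ∈ P, g x = x) ∧
  (∀ P : Set C, IsPanel cs δ P → (P ∩ α).ncard = 1 →
    ∀ x ∈ P \ α, ∀ y ∈ P \ α, ∃! g : Equiv.Perm C, g ∈ U ∧ g x = y)

/-- Opposite chambers in a spherical building: their distance has maximal length in `W`. -/
def OppositeChambers (x y : C) : Prop := ∀ u : W, cs.length u ≤ cs.length (δ x y)

/-- Opposite panels in a spherical building. -/
def OppositePanels (P Q : Set C) : Prop :=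
  (∀ p ∈ P, ∃ q ∈ Q, OppositeChambers cs δ p q) ∧
  (∀ q ∈ Q, ∃ p ∈ P, OppositeChambers cs δ q p)




local prefix:100 "σ" => cs.simple
local prefix:100 "π" => cs.wordProd
local prefix:100 "ℓ" => cs.length

/-! ### The sign representation on `W × ℤˣ` and the strong exchange property -/

def sigmaFun (i : B) : W × ℤˣ → W × ℤˣ :=
  fun p => (σ i * p.1 * σ i, if p.1 = σ i then -p.2 else p.2)

lemma conj_simple_iff (i : B) (t u : W) :
    σ i * t * σ i = u ↔ t = σ i * u * σ i := by
  constructor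
  · rintro rfl
    rw [← mul_assoc, ← mul_assoc, cs.simple_mul_simple_self]
    simp [mul_assoc]
  · rintro rfl
    rw [← mul_assoc, ← mul_assoc, cs.simple_mul_simple_self]
    simp [mul_assoc]

lemma sigmaFun_involutive (i : B) : Function.Involutive (sigmaFun cs i) := by
  rintro ⟨t, ε⟩
  have h1 : σ i * t * σ i = σ i ↔ t = σ i := by
    rw [conj_simple_iff]; simp
  simp only [sigmaFun, h1]
  by_cases h : t = σ i
  · simp [h]
  · simp [h, mul_assoc]

def sigmaPerm (i : B) : Equiv.Perm (W × ℤˣ) := (sigmaFun_involutive cs i).toPerm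

lemma sigmaPerm_apply (i : B) (t : W) (ε : ℤˣ) :
    sigmaPerm cs i (t, ε) = (σ i * t * σ i, if t = σ i then -ε else ε) := rfl

section braid

variable (i j : B)

local notation "p" => cs.simple i * cs.simple j

lemma p_inv : (cs.simple i * cs.simple j)⁻¹ = σ j * σ i := by
  rw [mul_inv_rev, cs.inv_simple, cs.inv_simple]

lemma sjp (n : ℤ) : σ j * p ^ n = p ^ (-n) * σ j := by
  have hconj : (MulAut.conj (σ j)) ((σ i * σ j) ^ n) = ((σ i * σ j) ^ n)⁻¹ := by
    have hone : (MulAut.conj (σ j)) (σ i * σ j) = (σ i * σ j)⁻¹ := by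
      simp only [MulAut.conj_apply, cs.inv_simple, p_inv]
      calc σ j * (σ i * σ j) * σ j = σ j * σ i * (σ j * σ j) := by group
        _ = σ j * σ i := by rw [cs.simple_mul_simple_self]; simp
    rw [map_zpow, hone, inv_zpow]
  simp only [MulAut.conj_apply, cs.inv_simple] at hconj
  have := congrArg (· * σ j) hconj
  calc σ j * p ^ n = σ j * p ^ n * (σ j * σ j) := by rw [cs.simple_mul_simple_self]; simp
    _ = (σ j * p ^ n * σ j) * σ j := by group
    _ = (p ^ n)⁻¹ * σ j := by rw [hconj]
    _ = p ^ (-n) * σ j := by rw [zpow_neg]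

lemma cond_iff (a b : ℤ) (t : W) :
    p ^ a * t * p ^ (-a) = p ^ (-b) * σ j ↔ t = p ^ (-(2 * a + b)) * σ j := by
  have hs := sjp cs i j
  constructor
  · intro h
    have ht : t = p ^ (-a) * (p ^ a * t * p ^ (-a)) * p ^ a := by group
    rw [h] at ht
    rw [ht]
    calc p ^ (-a) * (p ^ (-b) * σ j) * p ^ a
        = p ^ (-a) * p ^ (-b) * (σ j * p ^ a) := by group
      _ = p ^ (-a) * p ^ (-b) * (p ^ (-a) * σ j) := by rw [hs a]
      _ = p ^ (-(2 * a + b)) * σ j := by group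
  · rintro rfl
    calc p ^ a * (p ^ (-(2 * a + b)) * σ j) * p ^ (-a)
        = p ^ (-a - b) * (σ j * p ^ (-a)) := by group
      _ = p ^ (-a - b) * (p ^ a * σ j) := by rw [hs (-a), neg_neg]
      _ = p ^ (-b) * σ j := by group

lemma sigma_mul_pow_apply (a : ℕ) (t : W) (ε : ℤˣ) :
    ((sigmaPerm cs i * sigmaPerm cs j) ^ a) (t, ε) =
      (p ^ (a : ℤ) * t * p ^ (-(a : ℤ)),
        ε * ∏ l ∈ Finset.range (2 * a),
          (if t = p ^ (-(l : ℤ)) * σ j then (-1 : ℤˣ) else 1)) := by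
  induction a with
  | zero => simp
  | succ a ih =>
      rw [pow_succ', Equiv.Perm.mul_apply, ih]
      rw [Equiv.Perm.mul_apply, sigmaPerm_apply]
      set u := p ^ (a : ℤ) * t * p ^ (-(a : ℤ)) with hu
      rw [sigmaPerm_apply]
      have c1 : (u = σ j) ↔ t = p ^ (-((2 * a : ℕ) : ℤ)) * σ j := by
        rw [hu]
        have h := cond_iff cs i j (a : ℤ) 0 t
        rw [neg_zero, zpow_zero, one_mul, add_zero] at h
        have hcast : ((2 * a : ℕ) : ℤ) = 2 * (a : ℤ) := by push_cast; ring
        rw [h, hcast]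
      have c2 : (σ j * u * σ j = σ i) ↔ t = p ^ (-((2 * a + 1 : ℕ) : ℤ)) * σ j := by
        have e1 : (σ j * u * σ j = σ i) ↔ u = σ j * σ i * σ j := by
          constructor
          · intro h
            calc u = (σ j * σ j) * u * (σ j * σ j) := by
                  rw [cs.simple_mul_simple_self]; simp
              _ = σ j * (σ j * u * σ j) * σ j := by group
              _ = σ j * σ i * σ j := by rw [h]
          · intro h
            rw [h]
            calc σ j * (σ j * σ i * σ j) * σ j = (σ j * σ j) * σ i * (σ j * σ j) := by group
              _ = σ i := by rw [cs.simple_mul_simple_self]; simp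
        have e2 : σ j * σ i * σ j = p ^ (-(1 : ℤ)) * σ j := by
          rw [zpow_neg, zpow_one, p_inv]
        have hcast : ((2 * a + 1 : ℕ) : ℤ) = 2 * (a : ℤ) + 1 := by push_cast; ring
        rw [e1, e2, hu, cond_iff cs i j (a : ℤ) 1 t, hcast]
      have hfst : σ i * (σ j * u * σ j) * σ i
          = p ^ ((a + 1 : ℕ) : ℤ) * t * p ^ (-((a + 1 : ℕ) : ℤ)) := by
        have h1 : σ i * (σ j * u * σ j) * σ i = p * u * (σ j * σ i) := by group
        have e3 : p ^ ((a : ℤ) + 1) = p * p ^ (a : ℤ) := by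
          rw [add_comm, zpow_one_add]
        have e4 : p ^ (-((a : ℤ) + 1)) = p ^ (-(a : ℤ)) * (σ j * σ i) := by
          rw [neg_add, zpow_add, zpow_neg_one, p_inv]
        push_cast
        rw [h1, hu, e3, e4]
        group
      have hrange : 2 * (a + 1) = (2 * a) + 1 + 1 := by omega
      rw [hrange, Finset.prod_range_succ, Finset.prod_range_succ]
      rw [Prod.ext_iff]
      constructor
      · exact hfst
      · simp only [c1, c2]
        by_cases h1 : t = p ^ (-((2 * a : ℕ) : ℤ)) * σ j <;>
          by_cases h2 : t = p ^ (-((2 * a + 1 : ℕ) : ℤ)) * σ j <;>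
          simp [h1, h2] <;> ring
  done

lemma sigma_liftable : ((sigmaPerm cs i * sigmaPerm cs j) ^ M i j) = 1 := by
  ext x
  · rcases x with ⟨t, ε⟩
    rw [sigma_mul_pow_apply, Equiv.Perm.one_apply]
    have hp : (p : W) ^ ((M i j : ℕ) : ℤ) = 1 := by
      rw [zpow_natCast]; exact cs.simple_mul_simple_pow i j
    rw [Prod.fst]
    rw [show (-(((M i j : ℕ)) : ℤ)) = -((M i j : ℕ) : ℤ) from rfl, zpow_neg, hp]
    simp
  · rcases x with ⟨t, ε⟩
    rw [sigma_mul_pow_apply, Equiv.Perm.one_apply]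
    have hp : (p : W) ^ ((M i j : ℕ) : ℤ) = 1 := by
      rw [zpow_natCast]; exact cs.simple_mul_simple_pow i j
    rw [Prod.snd]
    have : ∏ l ∈ Finset.range (2 * M i j),
        (if t = p ^ (-(l : ℤ)) * σ j then (-1 : ℤˣ) else 1) = 1 := by
      rw [two_mul, Finset.prod_range_add]
      have : ∀ l, (if t = p ^ (-((M i j + l : ℕ) : ℤ)) * σ j then (-1 : ℤˣ) else 1)
          = (if t = p ^ (-(l : ℤ)) * σ j then (-1 : ℤˣ) else 1) := by
        intro l
        congr 2
        have : p ^ (-((M i j + l : ℕ) : ℤ)) = p ^ (-(l : ℤ)) := by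
          push_cast
          rw [neg_add, zpow_add, zpow_neg, hp]
          simp
        rw [this]
      simp only [this]
      exact Int.units_mul_self _
    rw [this]
    simp

end braid

lemma sigma_isLiftable : M.IsLiftable (sigmaPerm cs) := fun i j => sigma_liftable cs i j

/-- The sign representation `Φ : W →* Perm (W × ℤˣ)`. -/
def Phi : W →* Equiv.Perm (W × ℤˣ) := cs.lift ⟨sigmaPerm cs, sigma_isLiftable cs⟩

lemma Phi_simple (i : B) : Phi cs (σ i) = sigmaPerm cs i :=
  cs.lift_apply_simple (sigma_isLiftable cs) i

/-- The sign `μ(w, t)`. -/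
def mu (w t : W) : ℤˣ := ((Phi cs w) (t, 1)).2

lemma Phi_apply (w t : W) (ε : ℤˣ) :
    (Phi cs w) (t, ε) = (w * t * w⁻¹, ε * mu cs w t) := by
  induction w using CoxeterSystem.simple_induction_left cs generalizing t ε with
  | one => simp [mu]
  | mul_simple_left w i ih =>
      have hmul : Phi cs (σ i * w) = Phi cs (σ i) * Phi cs w := map_mul _ _ _
      rw [hmul, Equiv.Perm.mul_apply, ih t ε, Phi_simple, sigmaPerm_apply]
      have h2 : mu cs (σ i * w) t
          = if w * t * w⁻¹ = σ i then -(mu cs w t) else (mu cs w t) := by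
        rw [mu, hmul, Equiv.Perm.mul_apply, ih t 1, Phi_simple, sigmaPerm_apply]
        simp
      rw [h2]
      have h3 : σ i * (w * t * w⁻¹) * σ i = (σ i * w) * t * (σ i * w)⁻¹ := by
        rw [mul_inv_rev, cs.inv_simple]; group
      rw [Prod.ext_iff]
      refine ⟨h3, ?_⟩
      by_cases h : w * t * w⁻¹ = σ i
      · simp [h, mul_neg]
      · simp [h]

lemma mu_mul (w₁ w₂ t : W) :
    mu cs (w₁ * w₂) t = mu cs w₂ t * mu cs w₁ (w₂ * t * w₂⁻¹) := by
  have h2 : (Phi cs w₁) ((Phi cs w₂) (t, 1)) = (Phi cs (w₁ * w₂)) (t, 1) := by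
    rw [map_mul]; rfl
  rw [Phi_apply cs w₂, Phi_apply cs w₁, Phi_apply cs (w₁ * w₂)] at h2
  have := congrArg Prod.snd h2
  simp only [one_mul] at this
  exact this.symm

lemma mu_simple_self (i : B) : mu cs (σ i) (σ i) = -1 := by
  rw [mu, Phi_simple, sigmaPerm_apply]
  simp

lemma mu_count (ω : List B) (t : W) :
    mu cs (π ω) t = (-1 : ℤˣ) ^ (List.count t (cs.rightInvSeq ω)) := by
  induction ω with
  | nil => simp [mu]
  | cons i ω ih =>
      rw [cs.wordProd_cons, mu_mul, ih]
      have hris : cs.rightInvSeq (i :: ω) = ((π ω)⁻¹ * σ i * (π ω)) :: cs.rightInvSeq ω := rfl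
      rw [hris, List.count_cons]
      have hcond : ((π ω)⁻¹ * σ i * (π ω) = t) ↔ ((π ω) * t * (π ω)⁻¹ = σ i) := by
        constructor
        · intro hh; rw [← hh]; try group
        · intro hh; rw [← hh]; try group
      have hmusimple : mu cs (σ i) ((π ω) * t * (π ω)⁻¹)
          = if (π ω) * t * (π ω)⁻¹ = σ i then -1 else 1 := by
        rw [mu, Phi_simple, sigmaPerm_apply]
      rw [hmusimple]
      by_cases hc : (π ω)⁻¹ * σ i * (π ω) = t
      · rw [if_pos (hcond.mp hc), if_pos (beq_iff_eq.mpr hc), pow_add, pow_one, mul_comm]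
      · rw [if_neg (fun hh => hc (hcond.mpr hh)), if_neg (by simpa using hc), add_zero, mul_one]

lemma length_lt_of_mu_neg {w t : W} (h : mu cs w t = -1) : ℓ (w * t) < ℓ w := by
  obtain ⟨ω, hlen, rfl⟩ : ∃ ω : List B, ω.length = ℓ w ∧ π ω = w := by
    obtain ⟨ω, h1, h2⟩ := cs.exists_reduced_word w
    exact ⟨ω, by rw [h2]; exact Eq.symm h1, h2.symm⟩
  have hred : cs.IsReduced ω := by rw [CoxeterSystem.IsReduced, hlen]
  have hcount : List.count t (cs.rightInvSeq ω) ≠ 0 := by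
    intro hc
    rw [mu_count, hc, pow_zero] at h
    exact absurd h (by decide)
  have hmem : t ∈ cs.rightInvSeq ω := List.count_pos_iff.mp (Nat.pos_of_ne_zero hcount)
  exact (cs.isRightInversion_of_mem_rightInvSeq hred hmem).2

lemma mu_refl_self {t : W} (ht : cs.IsReflection t) : mu cs t t = -1 := by
  obtain ⟨v, k, rfl⟩ := ht
  have hvv : mu cs v⁻¹ (v * σ k * v⁻¹) * mu cs v (σ k) = 1 := by
    have h := mu_mul cs v v⁻¹ (v * σ k * v⁻¹)
    have h2 : v⁻¹ * (v * σ k * v⁻¹) * v⁻¹⁻¹ = σ k := by group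
    rw [h2, mul_inv_cancel] at h
    have h3 : mu cs (1 : W) (v * σ k * v⁻¹) = 1 := by simp [mu]
    rw [h3] at h
    exact h.symm
  have key : mu cs (v * (σ k * v⁻¹)) (v * σ k * v⁻¹)
      = mu cs (σ k * v⁻¹) (v * σ k * v⁻¹) * mu cs v ((σ k * v⁻¹) * (v * σ k * v⁻¹) * (σ k * v⁻¹)⁻¹) := by
    exact mu_mul cs v (σ k * v⁻¹) (v * σ k * v⁻¹)
  have e1 : (σ k * v⁻¹) * (v * σ k * v⁻¹) * (σ k * v⁻¹)⁻¹ = σ k := by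
    rw [mul_inv_rev, cs.inv_simple, inv_inv]
    calc σ k * v⁻¹ * (v * σ k * v⁻¹) * (v * σ k)
        = σ k * (v⁻¹ * v) * σ k * (v⁻¹ * v) * σ k := by group
      _ = σ k * σ k * σ k := by simp
      _ = σ k := by rw [cs.simple_mul_simple_self]; simp
  have e2 : mu cs (σ k * v⁻¹) (v * σ k * v⁻¹)
      = mu cs v⁻¹ (v * σ k * v⁻¹) * mu cs (σ k) (v⁻¹ * (v * σ k * v⁻¹) * v⁻¹⁻¹) := by
    exact mu_mul cs (σ k) v⁻¹ (v * σ k * v⁻¹)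
  have e3 : v⁻¹ * (v * σ k * v⁻¹) * v⁻¹⁻¹ = σ k := by group
  rw [e1] at key
  rw [e3] at e2
  rw [mu_simple_self] at e2
  have : v * (σ k * v⁻¹) = v * σ k * v⁻¹ := by group
  rw [this] at key
  rw [e2] at key
  rw [key]
  rw [mul_neg_one, neg_mul, hvv]

lemma mu_neg_of_length_lt {w t : W} (ht : cs.IsReflection t) (h : ℓ (w * t) < ℓ w) :
    mu cs w t = -1 := by
  have htt : t * t = 1 := ht.mul_self
  have key : mu cs ((w * t) * t) t = mu cs t t * mu cs (w * t) (t * t * t⁻¹) := mu_mul cs (w * t) t t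
  have e1 : t * t * t⁻¹ = t := by group
  rw [e1, mu_refl_self cs ht] at key
  have e2 : (w * t) * t = w := by rw [mul_assoc, htt, mul_one]
  rw [e2] at key
  have hwt : mu cs (w * t) t = 1 := by
    rcases Int.units_eq_one_or (mu cs (w * t) t) with h1 | h1
    · exact h1
    · exfalso
      have := length_lt_of_mu_neg cs h1
      rw [mul_assoc, htt, mul_one] at this
      omega
  rw [key, hwt]
  simp

/-- The strong exchange property. -/
lemma strong_exchange {ω : List B} (hred : cs.IsReduced ω) {t : W} (ht : cs.IsReflection t)
    (h : ℓ (π ω * t) < ℓ (π ω)) :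
    ∃ k < ω.length, π (ω.eraseIdx k) = π ω * t := by
  have hmu : mu cs (π ω) t = -1 := mu_neg_of_length_lt cs ht h
  have hcount : List.count t (cs.rightInvSeq ω) ≠ 0 := by
    intro hc
    rw [mu_count, hc, pow_zero] at hmu
    exact absurd hmu (by decide)
  have hmem : t ∈ cs.rightInvSeq ω := List.count_pos_iff.mp (Nat.pos_of_ne_zero hcount)
  obtain ⟨k, hk, hkt⟩ := List.mem_iff_getElem.mp hmem
  rw [cs.length_rightInvSeq] at hk
  refine ⟨k, hk, ?_⟩
  have := cs.wordProd_mul_getD_rightInvSeq ω k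
  rw [List.getD_eq_getElem _ 1 (by rw [cs.length_rightInvSeq]; exact hk), hkt] at this
  exact this.symm

/-! ### Reduced words with constrained letters, and parabolic subgroups -/


lemma reduce_word : ∀ (n : ℕ) (ω : List B), ω.length ≤ n →
    ∃ ω' : List B, π ω' = π ω ∧ ω'.length = ℓ (π ω) ∧ ∀ j ∈ ω', j ∈ ω := by
  intro n
  induction n with
  | zero =>
      intro ω h
      have : ω = [] := List.eq_nil_of_length_eq_zero (Nat.le_zero.mp h)
      subst this
      exact ⟨[], rfl, by simp, by simp⟩
  | succ n IH =>
      intro ω h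
      by_cases hred : ℓ (π ω) = ω.length
      · exact ⟨ω, rfl, hred.symm, fun j hj => hj⟩
      rcases List.eq_nil_or_concat' ω with rfl | ⟨ω₂, i, rfl⟩
      · simp at hred
      have hlen2 : ω₂.length ≤ n := by
        rw [List.length_append, List.length_singleton] at h
        omega
      obtain ⟨ρ, hρπ, hρlen, hρmem⟩ := IH ω₂ hlen2
      have hπ : π (ω₂ ++ [i]) = π ω₂ * σ i := by
        rw [cs.wordProd_append]; simp
      rcases cs.length_mul_simple (π ω₂) i with hup | hdown
      · refine ⟨ρ ++ [i], ?_, ?_, ?_⟩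
        · rw [cs.wordProd_append, hρπ, hπ]; simp
        · rw [List.length_append, hρlen, hπ, hup]; simp
        · intro j hj
          rcases List.mem_append.mp hj with hj | hj
          · exact List.mem_append.mpr (Or.inl (hρmem j hj))
          · exact List.mem_append.mpr (Or.inr hj)
      · have hredρ : cs.IsReduced ρ := by rw [CoxeterSystem.IsReduced, hρπ, hρlen]
        have hlt : ℓ (π ρ * σ i) < ℓ (π ρ) := by rw [hρπ]; omega
        obtain ⟨k, hk, hke⟩ := strong_exchange cs hredρ (cs.isReflection_simple i) hlt
        have hlen3 : (ρ.eraseIdx k).length ≤ n := by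
          have h1 : ρ.length ≤ n := by
            rw [hρlen]
            exact le_trans (cs.length_wordProd_le ω₂) hlen2
          have := List.length_eraseIdx_of_lt hk
          omega
        obtain ⟨ω', h1, h2, h3⟩ := IH (ρ.eraseIdx k) hlen3
        refine ⟨ω', ?_, ?_, ?_⟩
        · rw [h1, hke, hρπ, ← hπ]
        · rw [h2, hke, hρπ, ← hπ]
        · intro j hj
          have hj2 : j ∈ ρ := (List.eraseIdx_sublist ρ k).mem (h3 j hj)
          exact List.mem_append.mpr (Or.inl (hρmem j hj2))

lemma simple_mem_parab {J : Set B} {j : B} (hj : j ∈ J) : σ j ∈ parab cs J :=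
  Subgroup.subset_closure ⟨j, hj, rfl⟩

lemma wordProd_mem_parab {J : Set B} {ω : List B} (hω : ∀ j ∈ ω, j ∈ J) :
    π ω ∈ parab cs J := by
  induction ω with
  | nil => rw [cs.wordProd_nil]; exact one_mem _
  | cons i ω ih =>
      rw [cs.wordProd_cons]
      exact mul_mem (simple_mem_parab cs (hω i List.mem_cons_self))
        (ih fun j hj => hω j (List.mem_cons_of_mem _ hj))

lemma exists_reduced_J_word {J : Set B} {v : W} (hv : v ∈ parab cs J) :
    ∃ ω : List B, (∀ j ∈ ω, j ∈ J) ∧ π ω = v ∧ ω.length = ℓ v := by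
  have h0 : ∃ ω : List B, (∀ j ∈ ω, j ∈ J) ∧ π ω = v := by
    refine Subgroup.closure_induction ?_ ?_ ?_ ?_ hv
    · rintro x ⟨j, hj, rfl⟩
      exact ⟨[j], by simpa using hj, by simp⟩
    · exact ⟨[], by simp, by simp⟩
    · rintro x y hx hy ⟨ω₁, hm1, rfl⟩ ⟨ω₂, hm2, rfl⟩
      refine ⟨ω₁ ++ ω₂, ?_, by rw [cs.wordProd_append]⟩
      intro j hj
      rcases List.mem_append.mp hj with hj | hj
      · exact hm1 j hj
      · exact hm2 j hj
    · rintro x hx ⟨ω₁, hm1, rfl⟩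
      exact ⟨ω₁.reverse, fun j hj => hm1 j (List.mem_reverse.mp hj),
        by rw [cs.wordProd_reverse]⟩
  obtain ⟨ω₀, hmem, hprod⟩ := h0
  obtain ⟨ω, h1, h2, h3⟩ := reduce_word cs ω₀.length ω₀ le_rfl
  exact ⟨ω, fun j hj => hmem j (h3 j hj), by rw [h1, hprod], by rw [h2, hprod]⟩

/-- The key fact about minimal coset representatives. -/
lemma exists_min_coset_rep (w : W) (J : Set B) :
    ∃ u ∈ parab cs J, ∀ v ∈ parab cs J, ℓ (w * u * v) = ℓ (w * u) + ℓ v := by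
  have hne : {n : ℕ | ∃ u ∈ parab cs J, ℓ (w * u) = n}.Nonempty := ⟨ℓ (w * 1), 1, one_mem _, rfl⟩
  obtain ⟨u₀, hu₀mem, hu₀⟩ := Nat.sInf_mem hne
  have hmin : ∀ u ∈ parab cs J, ℓ (w * u₀) ≤ ℓ (w * u) := by
    intro u hu
    rw [hu₀]
    exact Nat.sInf_le ⟨u, hu, rfl⟩
  refine ⟨u₀, hu₀mem, ?_⟩
  have main : ∀ n, ∀ v ∈ parab cs J, ℓ v = n → ℓ (w * u₀ * v) = ℓ (w * u₀) + ℓ v := by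
    intro n
    induction n using Nat.strong_induction_on with
    | _ n IH =>
      intro v hv hn
      obtain ⟨ω, hωJ, hωv, hωlen⟩ := exists_reduced_J_word cs hv
      rcases List.eq_nil_or_concat' ω with rfl | ⟨ω', j, rfl⟩
      · have : v = 1 := by rw [← hωv, cs.wordProd_nil]
        rw [this]; simp
      have hjJ : j ∈ J := hωJ j (List.mem_append.mpr (Or.inr (List.mem_singleton_self j)))
      set v' := π ω' with hv'def
      have hcv : v = v' * σ j := by
        rw [← hωv, cs.wordProd_append]; simp [hv'def]
      have hv'mem : v' ∈ parab cs J :=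
        wordProd_mem_parab cs (fun l hl => hωJ l (List.mem_append.mpr (Or.inl hl)))
      have hωlen2 : ω'.length + 1 = ℓ v := by
        rw [← hωlen, List.length_append]; simp
      have hlv' : ℓ v' = ω'.length := by
        have hle : ℓ v' ≤ ω'.length := cs.length_wordProd_le ω'
        have hge : ℓ v ≤ ℓ v' + 1 := by
          rw [hcv]
          have := cs.length_mul_le v' (σ j)
          rwa [cs.length_simple] at this
        omega
      have hlnlt : ω'.length < n := by omega
      have IH' : ℓ (w * u₀ * v') = ℓ (w * u₀) + ℓ v' := IH ω'.length hlnlt v' hv'mem hlv'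
      rcases cs.length_mul_simple (w * u₀ * v') j with hup | hdown
      · have hgoal : ℓ (w * u₀ * v) = ℓ (w * u₀ * v' * σ j) := by rw [hcv, ← mul_assoc]
        rw [hgoal, hup, IH', hlv', ← hωlen2]
        omega
      · exfalso
        obtain ⟨ρa, hρalen, hρaprod⟩ := cs.exists_reduced_word (w * u₀)
        replace hρalen : ρa.length = ℓ (w * u₀) := by rw [hρaprod]; exact Eq.symm hρalen
        have hρprod : π (ρa ++ ω') = w * u₀ * v' := by
          rw [cs.wordProd_append, ← hρaprod]
        have hρred : cs.IsReduced (ρa ++ ω') := by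
          rw [CoxeterSystem.IsReduced, hρprod, IH', List.length_append, hρalen, hlv']
        have hlt : ℓ (π (ρa ++ ω') * σ j) < ℓ (π (ρa ++ ω')) := by
          rw [hρprod]; omega
        obtain ⟨k, hk, hke⟩ := strong_exchange cs hρred (cs.isReflection_simple j) hlt
        rw [hρprod] at hke
        by_cases hks : k < ρa.length
        · have herase : (ρa ++ ω').eraseIdx k = ρa.eraseIdx k ++ ω' :=
            List.eraseIdx_append_of_lt_length hks ω'
          have hpe : π (ρa.eraseIdx k) * v' = w * u₀ * v' * σ j := by
            rw [← cs.wordProd_append, ← herase, hke]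
          have hu1 : w * (u₀ * (v' * σ j * v'⁻¹)) = π (ρa.eraseIdx k) := by
            have : π (ρa.eraseIdx k) = (w * u₀ * v' * σ j) * v'⁻¹ := by
              rw [← hpe]; group
            rw [this]; group
          have hmem1 : u₀ * (v' * σ j * v'⁻¹) ∈ parab cs J :=
            mul_mem hu₀mem (mul_mem (mul_mem hv'mem (simple_mem_parab cs hjJ))
              (inv_mem hv'mem))
          have hlen1 : ℓ (w * (u₀ * (v' * σ j * v'⁻¹))) ≤ ρa.length - 1 := by
            rw [hu1]
            have := cs.length_wordProd_le (ρa.eraseIdx k)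
            rw [List.length_eraseIdx_of_lt hks] at this
            exact this
          have := hmin _ hmem1
          rw [← hρalen] at this
          omega
        · push_neg at hks
          have herase : (ρa ++ ω').eraseIdx k = ρa ++ ω'.eraseIdx (k - ρa.length) :=
            List.eraseIdx_append_of_length_le hks ω'
          have hpe : w * u₀ * π (ω'.eraseIdx (k - ρa.length)) = w * u₀ * v' * σ j := by
            conv_lhs => rw [hρaprod, ← cs.wordProd_append, ← herase]
            rw [hke]
          have hveq : π (ω'.eraseIdx (k - ρa.length)) = v' * σ j := by
            refine mul_left_cancel (a := w * u₀) ?_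
            rw [hpe]; group
          have hkw : k - ρa.length < ω'.length := by
            rw [List.length_append] at hk
            omega
          have hle2 : ℓ (v' * σ j) ≤ ω'.length - 1 := by
            rw [← hveq]
            have := cs.length_wordProd_le (ω'.eraseIdx (k - ρa.length))
            rwa [List.length_eraseIdx_of_lt hkw] at this
          rw [← hcv] at hle2
          omega
  intro v hv
  exact main (ℓ v) v hv rfl

lemma parab_singleton_cases {i : B} {w : W} (h : w ∈ parab cs {i}) : w = 1 ∨ w = σ i := by
  have himg : cs.simple '' {i} = {σ i} := by simp
  rw [parab, himg] at h
  refine Subgroup.closure_induction ?_ ?_ ?_ ?_ h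
  · rintro y hy
    rw [Set.mem_singleton_iff] at hy
    exact Or.inr hy
  · exact Or.inl rfl
  · rintro y z hy hz (rfl | rfl) (rfl | rfl)
    · exact Or.inl (by simp)
    · exact Or.inr (by simp)
    · exact Or.inr (by simp)
    · exact Or.inl (cs.simple_mul_simple_self i)
  · rintro y hy (rfl | rfl)
    · exact Or.inl (by simp)
    · exact Or.inr (cs.inv_simple i)

lemma simple_ne_one (i : B) : σ i ≠ (1 : W) := by
  intro h
  have := cs.length_simple i
  rw [h, cs.length_one] at this
  exact absurd this (by omega)

/-! ### Building lemmas -/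

section BldgSection
variable {cs} {δ}
variable (hb : IsBuilding cs δ)
include hb

lemma delta_self (x : C) : δ x x = 1 := (hb.eq_one_iff x x).mpr rfl

lemma simple_symm {x y : C} {i : B} (h : δ x y = σ i) : δ y x = σ i := by
  rcases hb.step y x y i h with h1 | h1
  · rw [delta_self hb] at h1
    exfalso
    have : y = x := (hb.eq_one_iff y x).mp h1.symm
    rw [this, delta_self hb] at h
    exact simple_ne_one cs i h.symm
  · rw [delta_self hb] at h1
    have : δ y x = (σ i)⁻¹ := by
      have := congrArg (· * (σ i)⁻¹) h1
      simpa [mul_assoc] using this.symm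
    rwa [cs.inv_simple] at this

/-- Peeling: decompose the step at the end of a minimal gallery. -/
lemma delta_peel {y z : C} {j : B} (hj : ℓ (δ y z * σ j) < ℓ (δ y z)) :
    ∃ u, δ y u = δ y z * σ j ∧ δ u z = σ j := by
  obtain ⟨u, h1, h2⟩ := hb.exists_step y z j
  exact ⟨u, h2, simple_symm hb h1⟩

lemma delta_comp : ∀ (n : ℕ) (x y z : C), ℓ (δ y z) = n →
    ℓ (δ x y * δ y z) = ℓ (δ x y) + ℓ (δ y z) → δ x z = δ x y * δ y z := by
  intro n
  induction n using Nat.strong_induction_on with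
  | _ n IH =>
    intro x y z hn hadd
    by_cases h0 : δ y z = 1
    · have heq : y = z := (hb.eq_one_iff y z).mp h0
      subst heq
      rw [delta_self hb, mul_one]
    · obtain ⟨j, hj⟩ := cs.exists_rightDescent_of_ne_one h0
      have hjlt : ℓ (δ y z * σ j) < ℓ (δ y z) := hj
      obtain ⟨u, hu1, hu2⟩ := delta_peel hb hjlt
      have hlen : ℓ (δ y z * σ j) + 1 = ℓ (δ y z) := by
        rcases cs.length_mul_simple (δ y z) j with h | h
        · omega
        · omega
      have hprefix : ℓ (δ x y * (δ y z * σ j)) = ℓ (δ x y) + ℓ (δ y z * σ j) := by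
        have hle : ℓ (δ x y * (δ y z * σ j)) ≤ ℓ (δ x y) + ℓ (δ y z * σ j) :=
          cs.length_mul_le _ _
        have heq : δ x y * δ y z = (δ x y * (δ y z * σ j)) * σ j := by
          simp [mul_assoc]
        have h2 : ℓ (δ x y * δ y z) ≤ ℓ (δ x y * (δ y z * σ j)) + 1 := by
          rw [heq]
          have := cs.length_mul_le (δ x y * (δ y z * σ j)) (σ j)
          rwa [cs.length_simple] at this
        omega
      have hIH : δ x u = δ x y * (δ y z * σ j) := by
        have := IH (ℓ (δ y z * σ j)) (by omega) x y u (by rw [hu1]) (by rw [hu1]; exact hprefix)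
        rwa [hu1] at this
      have hfin : ℓ (δ x u * σ j) = ℓ (δ x u) + 1 := by
        have he : δ x u * σ j = δ x y * δ y z := by
          rw [hIH]; simp [mul_assoc]
        rw [he, hIH, hprefix, hadd]
        omega
      have := hb.step_of_length x u z j hu2 hfin
      rw [this, hIH]
      simp [mul_assoc]

lemma delta_inv : ∀ (n : ℕ) (x y : C), ℓ (δ x y) = n → δ y x = (δ x y)⁻¹ := by
  intro n
  induction n using Nat.strong_induction_on with
  | _ n IH =>
    intro x y hn
    by_cases h0 : δ x y = 1
    · have heq : x = y := (hb.eq_one_iff x y).mp h0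
      subst heq
      rw [delta_self hb, inv_one]
    · obtain ⟨j, hj⟩ := cs.exists_rightDescent_of_ne_one h0
      have hjlt : ℓ (δ x y * σ j) < ℓ (δ x y) := hj
      obtain ⟨u, hu1, hu2⟩ := delta_peel hb hjlt
      have hux : δ u x = (δ x u)⁻¹ := by
        refine IH (ℓ (δ x u)) ?_ x u rfl
        rw [hu1]; omega
      have hlen : ℓ (δ x y * σ j) + 1 = ℓ (δ x y) := by
        rcases cs.length_mul_simple (δ x y) j with h | h <;> omega
      have huy : δ u y = σ j := hu2
      have hcomp : δ y x = δ y u * δ u x := by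
        refine delta_comp hb (ℓ (δ u x)) y u x rfl ?_
        have h1 : δ y u = σ j := simple_symm hb huy
        have h2 : δ u x = σ j * (δ x y)⁻¹ := by
          rw [hux, hu1, mul_inv_rev, cs.inv_simple]
        rw [h1, h2]
        have e : σ j * (σ j * (δ x y)⁻¹) = (δ x y)⁻¹ := by
          rw [← mul_assoc, cs.simple_mul_simple_self, one_mul]
        rw [e, cs.length_simple, cs.length_inv]
        have e2 : ℓ (σ j * (δ x y)⁻¹) = ℓ (δ x y * σ j) := by
          have : σ j * (δ x y)⁻¹ = (δ x y * σ j)⁻¹ := by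
            rw [mul_inv_rev, cs.inv_simple]
          rw [this, cs.length_inv]
        rw [e2]
        omega
      rw [hcomp, simple_symm hb huy, hux, hu1, mul_inv_rev, cs.inv_simple, ← mul_assoc,
        cs.simple_mul_simple_self, one_mul]

lemma delta_inv' (x y : C) : δ y x = (δ x y)⁻¹ := delta_inv hb (ℓ (δ x y)) x y rfl

lemma delta_length_symm (x y : C) : ℓ (δ y x) = ℓ (δ x y) := by
  rw [delta_inv' hb, cs.length_inv]

lemma delta_triangle : ∀ (n : ℕ) (x y z : C), ℓ (δ y z) = n →
    ℓ (δ x z) ≤ ℓ (δ x y) + ℓ (δ y z) := by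
  intro n
  induction n using Nat.strong_induction_on with
  | _ n IH =>
    intro x y z hn
    by_cases h0 : δ y z = 1
    · have heq : y = z := (hb.eq_one_iff y z).mp h0
      subst heq
      rw [delta_self hb, cs.length_one]
      omega
    · obtain ⟨j, hj⟩ := cs.exists_rightDescent_of_ne_one h0
      have hjlt : ℓ (δ y z * σ j) < ℓ (δ y z) := hj
      obtain ⟨u, hu1, hu2⟩ := delta_peel hb hjlt
      have hIH : ℓ (δ x u) ≤ ℓ (δ x y) + ℓ (δ y u) := by
        refine IH (ℓ (δ y u)) ?_ x y u rfl
        rw [hu1]; omega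
      have hstep : ℓ (δ x z) ≤ ℓ (δ x u) + 1 := by
        rcases hb.step x u z j hu2 with h | h
        · rw [h]; omega
        · rw [h]
          have := cs.length_mul_le (δ x u) (σ j)
          rwa [cs.length_simple] at this
      have hlen : ℓ (δ y z * σ j) + 1 = ℓ (δ y z) := by
        rcases cs.length_mul_simple (δ y z) j with h | h <;> omega
      rw [hu1] at hIH
      omega

lemma delta_triangle' (x y z : C) : ℓ (δ x z) ≤ ℓ (δ x y) + ℓ (δ y z) :=
  delta_triangle hb (ℓ (δ y z)) x y z rfl

lemma mem_residue_self (J : Set B) (x : C) : x ∈ residue cs δ J x := by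
  show δ x x ∈ parab cs J
  rw [delta_self hb]
  exact one_mem _

lemma delta_coset {J : Set B} : ∀ (n : ℕ) (x y z : C), ℓ (δ y z) = n →
    δ y z ∈ parab cs J → ∃ v ∈ parab cs J, δ x z = δ x y * v := by
  intro n
  induction n using Nat.strong_induction_on with
  | _ n IH =>
    intro x y z hn hmem
    by_cases h0 : δ y z = 1
    · have heq : y = z := (hb.eq_one_iff y z).mp h0
      subst heq
      exact ⟨1, one_mem _, by rw [mul_one]⟩
    · obtain ⟨ω, hωJ, hωprod, hωlen⟩ := exists_reduced_J_word cs hmem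
      rcases List.eq_nil_or_concat' ω with rfl | ⟨ω', j, rfl⟩
      · rw [cs.wordProd_nil] at hωprod
        exact absurd hωprod.symm h0
      have hjJ : j ∈ J := hωJ j (List.mem_append.mpr (Or.inr (List.mem_singleton_self j)))
      have hω'prod : π ω' = δ y z * σ j := by
        have : π (ω' ++ [j]) = π ω' * σ j := by rw [cs.wordProd_append]; simp
        rw [this] at hωprod
        rw [← hωprod]
        simp
      have hlt : ℓ (δ y z * σ j) < ℓ (δ y z) := by
        have h1 : ℓ (δ y z * σ j) ≤ ω'.length := by
          rw [← hω'prod]; exact cs.length_wordProd_le ω'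
        have h2 : (ω' ++ [j]).length = ℓ (δ y z) := hωlen
        rw [List.length_append, List.length_singleton] at h2
        omega
      obtain ⟨u, hu1, hu2⟩ := delta_peel hb hlt
      have humem : δ y u ∈ parab cs J := by
        rw [hu1, ← hω'prod]
        exact wordProd_mem_parab cs (fun l hl => hωJ l (List.mem_append.mpr (Or.inl hl)))
      obtain ⟨v₁, hv₁mem, hv₁⟩ := IH (ℓ (δ y u)) (by rw [hu1]; omega) x y u rfl humem
      rcases hb.step x u z j hu2 with h | h
      · exact ⟨v₁, hv₁mem, by rw [h, hv₁]⟩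
      · exact ⟨v₁ * σ j, mul_mem hv₁mem (simple_mem_parab cs hjJ),
          by rw [h, hv₁, mul_assoc]⟩

lemma residue_eq {J : Set B} {x y : C} (h : y ∈ residue cs δ J x) :
    residue cs δ J x = residue cs δ J y := by
  ext z
  constructor
  · intro hz
    show δ y z ∈ parab cs J
    have hyx : δ y x ∈ parab cs J := by
      rw [delta_inv' hb]
      exact inv_mem h
    obtain ⟨v, hvmem, hv⟩ := delta_coset hb (ℓ (δ x z)) y x z rfl hz
    rw [hv]
    exact mul_mem hyx hvmem
  · intro hz
    show δ x z ∈ parab cs J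
    obtain ⟨v, hvmem, hv⟩ := delta_coset hb (ℓ (δ y z)) x y z rfl hz
    rw [hv]
    exact mul_mem h hvmem

lemma gate_unique {R : Set C} {c g g' : C} (h : IsGate cs δ R c g) (h' : IsGate cs δ R c g') :
    g = g' := by
  have h1 := h.2 g' h'.1
  have h2 := h'.2 g h.1
  have h3 : ℓ (δ g' g) = ℓ (δ g g') := delta_length_symm hb g g'
  have h4 : ℓ (δ g g') = 0 := by omega
  have : δ g g' = 1 := cs.length_eq_zero_iff.mp h4
  exact (hb.eq_one_iff g g').mp this

lemma proj_eq_gate {R : Set C} {c g : C} (h : IsGate cs δ R c g) : proj cs δ R c = g := by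
  rw [proj, dif_pos ⟨g, h⟩]
  exact gate_unique hb (Exists.choose_spec (⟨g, h⟩ : ∃ g, IsGate cs δ R c g)) h

lemma exists_chamber_word (c x : C) (J : Set B) (ω : List B) (hω : ∀ j ∈ ω, j ∈ J) :
    ∃ g, g ∈ residue cs δ J x ∧ δ c g = δ c x * π ω := by
  induction ω using List.reverseRecOn with
  | nil =>
      exact ⟨x, mem_residue_self hb J x, by rw [cs.wordProd_nil, mul_one]⟩
  | append_singleton ω j ih =>
      obtain ⟨g₀, hg₀R, hg₀⟩ := ih (fun l hl => hω l (List.mem_append.mpr (Or.inl hl)))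
      have hjJ : j ∈ J := hω j (List.mem_append.mpr (Or.inr (List.mem_singleton_self j)))
      obtain ⟨u, hu1, hu2⟩ := hb.exists_step c g₀ j
      refine ⟨u, ?_, ?_⟩
      · show δ x u ∈ parab cs J
        rcases hb.step x g₀ u j hu1 with h | h
        · rw [h]; exact hg₀R
        · rw [h]; exact mul_mem hg₀R (simple_mem_parab cs hjJ)
      · rw [hu2, hg₀, cs.wordProd_append, cs.wordProd_singleton, mul_assoc]

lemma exists_good_gate (J : Set B) (x c : C) :
    ∃ g, g ∈ residue cs δ J x ∧
      (∀ v ∈ parab cs J, ℓ (δ c g * v) = ℓ (δ c g) + ℓ v) ∧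
      ∀ y ∈ residue cs δ J x, δ c y = δ c g * δ g y ∧
        ℓ (δ c y) = ℓ (δ c g) + ℓ (δ g y) := by
  obtain ⟨u₀, hu₀, hadd⟩ := exists_min_coset_rep cs (δ c x) J
  obtain ⟨ωu, hωuJ, hωuprod, _⟩ := exists_reduced_J_word cs hu₀
  obtain ⟨g, hgR, hgδ⟩ := exists_chamber_word hb c x J ωu hωuJ
  have hδcg : δ c g = δ c x * u₀ := by rw [hgδ, hωuprod]
  have hadd' : ∀ v ∈ parab cs J, ℓ (δ c g * v) = ℓ (δ c g) + ℓ v := by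
    intro v hv
    rw [hδcg]
    exact hadd v hv
  have key : ∀ (n : ℕ) (y : C), ℓ (δ g y) = n → δ g y ∈ parab cs J →
      δ c y = δ c g * δ g y := by
    intro n
    induction n using Nat.strong_induction_on with
    | _ n IH =>
      intro y hn hmem
      by_cases h0 : δ g y = 1
      · have heq : g = y := (hb.eq_one_iff g y).mp h0
        subst heq
        rw [delta_self hb, mul_one]
      · obtain ⟨ω, hωJ, hωprod, hωlen⟩ := exists_reduced_J_word cs hmem
        rcases List.eq_nil_or_concat' ω with rfl | ⟨ω', j, rfl⟩
        · rw [cs.wordProd_nil] at hωprod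
          exact absurd hωprod.symm h0
        have hjJ : j ∈ J := hωJ j (List.mem_append.mpr (Or.inr (List.mem_singleton_self j)))
        have hω'prod : π ω' = δ g y * σ j := by
          have : π (ω' ++ [j]) = π ω' * σ j := by rw [cs.wordProd_append]; simp
          rw [this] at hωprod
          rw [← hωprod]; simp
        have hω'mem : δ g y * σ j ∈ parab cs J := by
          rw [← hω'prod]
          exact wordProd_mem_parab cs (fun l hl => hωJ l (List.mem_append.mpr (Or.inl hl)))
        have hlt : ℓ (δ g y * σ j) < ℓ (δ g y) := by
          have h1 : ℓ (δ g y * σ j) ≤ ω'.length := by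
            rw [← hω'prod]; exact cs.length_wordProd_le ω'
          have h2 := hωlen
          rw [List.length_append, List.length_singleton] at h2
          omega
        obtain ⟨u, hu1, hu2⟩ := delta_peel hb hlt
        have hIH : δ c u = δ c g * (δ g y * σ j) := by
          have := IH (ℓ (δ g y * σ j)) (by omega) u (by rw [hu1]) (by rw [hu1]; exact hω'mem)
          rw [← hu1]; rw [this, hu1]
        have hfin : ℓ (δ c u * σ j) = ℓ (δ c u) + 1 := by
          have he : δ c u * σ j = δ c g * δ g y := by rw [hIH]; simp [mul_assoc]
          rw [he, hIH, hadd' _ hω'mem, hadd' _ hmem]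
          have hlen : ℓ (δ g y * σ j) + 1 = ℓ (δ g y) := by
            rcases cs.length_mul_simple (δ g y) j with h | h <;> omega
          omega
        have := hb.step_of_length c u y j hu2 hfin
        rw [this, hIH]
        simp [mul_assoc]
  refine ⟨g, hgR, hadd', ?_⟩
  intro y hy
  have hgy : δ g y ∈ parab cs J := by
    have heq := residue_eq hb hgR
    rw [heq] at hy
    exact hy
  have h1 : δ c y = δ c g * δ g y := key (ℓ (δ g y)) y rfl hgy
  exact ⟨h1, by rw [h1]; exact hadd' _ hgy⟩

lemma proj_residue_props (J : Set B) (x c : C) :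
    proj cs δ (residue cs δ J x) c ∈ residue cs δ J x ∧
      (∀ v ∈ parab cs J, ℓ (δ c (proj cs δ (residue cs δ J x) c) * v)
        = ℓ (δ c (proj cs δ (residue cs δ J x) c)) + ℓ v) ∧
      ∀ y ∈ residue cs δ J x,
        δ c y = δ c (proj cs δ (residue cs δ J x) c) * δ (proj cs δ (residue cs δ J x) c) y ∧
        ℓ (δ c y) = ℓ (δ c (proj cs δ (residue cs δ J x) c))
          + ℓ (δ (proj cs δ (residue cs δ J x) c) y) := by
  obtain ⟨g, h1, h2, h3⟩ := exists_good_gate hb J x c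
  have hg : IsGate cs δ (residue cs δ J x) c g := ⟨h1, fun y hy => (h3 y hy).2⟩
  have heq : proj cs δ (residue cs δ J x) c = g := proj_eq_gate hb hg
  rw [heq]
  exact ⟨h1, h2, h3⟩

lemma proj_panel_lt {j : B} {a c : C} (h : ℓ (δ c a * σ j) < ℓ (δ c a)) :
    δ c (proj cs δ (residue cs δ {j} a) c) = δ c a * σ j ∧
      δ a (proj cs δ (residue cs δ {j} a) c) = σ j := by
  obtain ⟨h1, h2, h3⟩ := proj_residue_props hb {j} a c
  set g := proj cs δ (residue cs δ {j} a) c with hgdef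
  have ha : a ∈ residue cs δ {j} a := mem_residue_self hb {j} a
  obtain ⟨hprod, hlen⟩ := h3 a ha
  have hga : δ g a ∈ parab cs {j} := by
    have heq := residue_eq hb h1
    rw [heq] at ha
    exact ha
  rcases parab_singleton_cases cs hga with h0 | h0
  · exfalso
    have hge : g = a := (hb.eq_one_iff g a).mp h0
    have := h2 (σ j) (simple_mem_parab cs (Set.mem_singleton j))
    rw [hge, cs.length_simple] at this
    omega
  · have hca : δ c a = δ c g * σ j := by rw [hprod, h0]
    constructor
    · rw [hca, mul_assoc, cs.simple_mul_simple_self, mul_one]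
    · rw [delta_inv' hb, h0, cs.inv_simple]

lemma proj_residue_mem_apartment {A : Set C} (hA : IsApartment cs δ A) {J : Set B} {x : C}
    (hne : (A ∩ residue cs δ J x).Nonempty) {c : C} (hc : c ∈ A) :
    proj cs δ (residue cs δ J x) c ∈ A := by
  obtain ⟨a₀, ha₀A, ha₀R⟩ := hne
  obtain ⟨hgR, hadd, hspec⟩ := proj_residue_props hb J x c
  set g := proj cs δ (residue cs δ J x) c with hgdef
  suffices h : ∀ (n : ℕ) (a : C), a ∈ A → a ∈ residue cs δ J x → ℓ (δ g a) = n → g ∈ A by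
    exact h (ℓ (δ g a₀)) a₀ ha₀A ha₀R rfl
  intro n
  induction n using Nat.strong_induction_on with
  | _ n IH =>
    intro a haA haR hn
    by_cases h0 : δ g a = 1
    · have : g = a := (hb.eq_one_iff g a).mp h0
      rw [this]; exact haA
    have hga : δ g a ∈ parab cs J := by
      have heq := residue_eq hb hgR
      rw [heq] at haR
      exact haR
    obtain ⟨ω, hωJ, hωprod, hωlen⟩ := exists_reduced_J_word cs hga
    rcases List.eq_nil_or_concat' ω with rfl | ⟨ω', j, rfl⟩
    · rw [cs.wordProd_nil] at hωprod
      exact absurd hωprod.symm h0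
    have hjJ : j ∈ J := hωJ j (List.mem_append.mpr (Or.inr (List.mem_singleton_self j)))
    have hω'prod : π ω' = δ g a * σ j := by
      have : π (ω' ++ [j]) = π ω' * σ j := by rw [cs.wordProd_append]; simp
      rw [this] at hωprod
      rw [← hωprod]; simp
    have hω'mem : δ g a * σ j ∈ parab cs J := by
      rw [← hω'prod]
      exact wordProd_mem_parab cs (fun l hl => hωJ l (List.mem_append.mpr (Or.inl hl)))
    have hvj : ℓ (δ g a * σ j) < ℓ (δ g a) := by
      have h1 : ℓ (δ g a * σ j) ≤ ω'.length := by
        rw [← hω'prod]; exact cs.length_wordProd_le ω'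
      have h2 := hωlen
      rw [List.length_append, List.length_singleton] at h2
      omega
    obtain ⟨hprodA, hlenA⟩ := hspec a haR
    have hlt : ℓ (δ c a * σ j) < ℓ (δ c a) := by
      have h2 : δ c a * σ j = δ c g * (δ g a * σ j) := by rw [hprodA]; group
      rw [h2, hadd _ hω'mem, hlenA]
      omega
    have hP : IsPanel cs δ (residue cs δ {j} a) := ⟨j, a, rfl⟩
    have hPA : ((residue cs δ {j} a) ∩ A).Nonempty :=
      ⟨a, mem_residue_self hb {j} a, haA⟩
    have ha'A : proj cs δ (residue cs δ {j} a) c ∈ A := hA.2.1 _ hP hPA c hc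
    obtain ⟨hca', haa'⟩ := proj_panel_lt hb hlt
    set a' := proj cs δ (residue cs δ {j} a) c with ha'def
    have ha'R : a' ∈ residue cs δ J x := by
      rw [residue_eq hb haR]
      show δ a a' ∈ parab cs J
      rw [haa']
      exact simple_mem_parab cs hjJ
    obtain ⟨hprodA', _⟩ := hspec a' ha'R
    have hcc : δ c g * δ g a' = δ c g * (δ g a * σ j) := by
      rw [← hprodA', hca', hprodA]; group
    have hga' : δ g a' = δ g a * σ j := mul_left_cancel hcc
    exact IH (ℓ (δ g a * σ j)) (by omega) a' ha'A ha'R (by rw [hga'])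

lemma gate_retract_aux {R T : Set C} {t x t' x' : C}
    (hxR : x ∈ R) (hx'R : x' ∈ R) (htT : t ∈ T)
    (hgatex : ∀ y ∈ R, ℓ (δ t y) = ℓ (δ t x) + ℓ (δ x y))
    (hgatex' : ∀ y ∈ R, ℓ (δ t' y) = ℓ (δ t' x') + ℓ (δ x' y))
    (hgatet' : ∀ y ∈ T, ℓ (δ x y) = ℓ (δ x t') + ℓ (δ t' y)) :
    x' = x := by
  have L1 := hgatex x' hx'R
  have L2 := hgatex' x hxR
  have L3 := hgatet' t htT
  have L4 := delta_triangle' hb t t' x'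
  have E1 := delta_length_symm hb t x
  have E2 := delta_length_symm hb t' x
  have E3 := delta_length_symm hb t t'
  have E4 := delta_length_symm hb x x'
  have h0 : ℓ (δ x x') = 0 := by omega
  have : δ x x' = 1 := cs.length_eq_zero_iff.mp h0
  exact ((hb.eq_one_iff x x').mp this).symm

lemma proj_inter_eq {A : Set C} {J : Set B} {xR : C} {c : C}
    (hmem : proj cs δ (residue cs δ J xR) c ∈ A) :
    proj cs δ (A ∩ residue cs δ J xR) c = proj cs δ (residue cs δ J xR) c := by
  obtain ⟨h1, _h2, h3⟩ := proj_residue_props hb J xR c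
  exact proj_eq_gate hb ⟨⟨hmem, h1⟩, fun y hy => (h3 y hy.2).2⟩

end BldgSection

/-- For residues `R, T` and an apartment `A` meeting both,
`A ∩ proj_R T = proj_{A∩R} (A ∩ T)`. -/
theorem statement4 (hb : IsBuilding cs δ) {R T A : Set C} (hR : IsResidue cs δ R)
    (hT : IsResidue cs δ T) (hA : IsApartment cs δ A)
    (hAR : (A ∩ R).Nonempty) (hAT : (A ∩ T).Nonempty) :
    A ∩ projSet cs δ R T = projSet cs δ (A ∩ R) (A ∩ T) := by
  obtain ⟨J, xR, rfl⟩ := hR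
  obtain ⟨K, xT, rfl⟩ := hT
  ext x
  constructor
  · rintro ⟨hxA, t, htT, hxeq⟩
    obtain ⟨hxR, haddRt, hspecRt⟩ := proj_residue_props hb J xR t
    rw [hxeq] at hxR hspecRt
    obtain ⟨ht'T, haddTx, hspecTx⟩ := proj_residue_props hb K xT x
    obtain ⟨hx'R, haddRt', hspecRt'⟩ :=
      proj_residue_props hb J xR (proj cs δ (residue cs δ K xT) x)
    have hx'eq : proj cs δ (residue cs δ J xR) (proj cs δ (residue cs δ K xT) x) = x :=
      gate_retract_aux hb hxR hx'R htT (fun y hy => (hspecRt y hy).2)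
        (fun y hy => (hspecRt' y hy).2) (fun y hy => (hspecTx y hy).2)
    have ht'A : proj cs δ (residue cs δ K xT) x ∈ A :=
      proj_residue_mem_apartment hb hA hAT hxA
    refine ⟨proj cs δ (residue cs δ K xT) x, ⟨ht'A, ht'T⟩, ?_⟩
    have hpe := proj_inter_eq hb (A := A)
      (c := proj cs δ (residue cs δ K xT) x) (by rw [hx'eq]; exact hxA)
    rw [hpe]
    exact hx'eq
  · rintro ⟨t', ⟨ht'A, ht'T⟩, hxeq⟩
    have hgA : proj cs δ (residue cs δ J xR) t' ∈ A :=
      proj_residue_mem_apartment hb hA hAR ht'A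
    have hpe := proj_inter_eq hb (A := A) hgA
    rw [← hxeq, hpe]
    exact ⟨hgA, t', ht'T, rfl⟩


end BldgPaper
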